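/- For N ≥ 1 and real x with 0 ≤ x < 1, the sum over k from 0 to N-1 of C(N-1,k) x^k (1-x)^{N-1-k} · N/(N-k) equals (1 - x^N)/(1-x). -/

import Mathlib

theorem stmt_3 (N : ℕ) (hN : 1 ≤ N) (x : ℝ) (hx0 : 0 ≤ x) (hx1 : x < 1) :
    ∑ k ∈ Finset.range N,
      ((N - 1).choose k : ℝ) * x ^ k * (1 - x) ^ (N - 1 - k) * (N / ((N : ℝ) - k)) =
    (1 - x ^ N) / (1 - x) := by
  have hx : (0:ℝ) < 1 - x := by linarith
  have hxne : (1:ℝ) - x ≠ 0 := ne_of_gt hx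
  have hsum : ∑ k ∈ Finset.range (N+1), x^k * (1-x)^(N-k) * (N.choose k : ℝ) = 1 := by
    have h := add_pow x (1-x) N
    rw [show x + (1-x) = 1 by ring, one_pow] at h
    exact h.symm
  rw [Finset.sum_range_succ] at hsum
  simp at hsum
  have key : ∀ k ∈ Finset.range N,
      ((N - 1).choose k : ℝ) * x ^ k * (1 - x) ^ (N - 1 - k) * (N / ((N : ℝ) - k)) =
      x^k * (1-x)^(N-k) * (N.choose k : ℝ) / (1 - x) := by
    intro k hk
    rw [Finset.mem_range] at hk
    have hNk : ((N : ℝ) - k) ≠ 0 := by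
      have : (k:ℝ) < N := by exact_mod_cast hk
      linarith
    have hc : (N:ℝ) * ((N-1).choose k) = ((N:ℝ) - k) * (N.choose k) := by
      have h1 : N * (N-1).choose k = N.choose k * (N - k) := by
        obtain ⟨m, rfl⟩ : ∃ m, N = m + 1 := ⟨N - 1, by omega⟩
        simp only [Nat.add_sub_cancel]
        have h2 := Nat.add_one_mul_choose_eq m k
        rw [h2, Nat.choose_succ_right_eq]
      have := congrArg (Nat.cast : ℕ → ℝ) h1
      push_cast [Nat.cast_sub hk.le] at this
      linarith
    have hpow : (1-x)^(N-k) = (1-x)^(N-1-k)*(1-x) := by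
      rw [← pow_succ]
      congr 1
      omega
    rw [hpow]
    field_simp
    linear_combination x^k * hc
  rw [Finset.sum_congr rfl key, ← Finset.sum_div]
  congr 1
  linarith
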